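/- Let k ≥ 2, let a_0,…,a_k, b_0,…,b_k ∈ ℝ, let g_n : ℝ → ℝ for n ≥ 0, and let ρ = μ(cos θ + i sin θ) with μ > 0 and sin θ ≠ 0 be a common root of the complexified polynomials P and Q. Let p′_j, q′_j (0 ≤ j ≤ k−2) be the real numbers p′_j = μ^{j+1} sin((j+2)θ)/sin θ − (1/sin θ)Σ_{m=0}^{j} a_m μ^{j−m} sin((j−m+1)θ) and q′_j = (1/sin θ)Σ_{m=0}^{j} b_m μ^{j−m} sin((j−m+1)θ). Then a real sequence (x_n)_{n ≥ −k} is a solution of equation (★) if and only if the real sequence r_n := x_n − 2μ cos θ · x_{n−1} + μ² x_{n−2} (defined for n ≥ −k+2) satisfies the real second factor equation (FE1): r_{n+1} = −Σ_{j=0}^{k−2} p′_j r_{n−j} + g_n(Σ_{j=0}^{k−2} q′_j r_{n−j}) for all n ≥ 0. -/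

import Mathlib

open Finset Polynomial

/-- The polynomial `P(u) = u^(k+1) - ∑_{i=0}^{k} a_i u^(k-i)`. -/
noncomputable def polyP {F : Type*} [Field F] (k : ℕ) (a : ℕ → F) : Polynomial F :=
  X ^ (k + 1) - ∑ i ∈ range (k + 1), C (a i) * X ^ (k - i)

/-- The polynomial `Q(u) = ∑_{i=0}^{k} b_i u^(k-i)`. -/
noncomputable def polyQ {F : Type*} [Field F] (k : ℕ) (b : ℕ → F) : Polynomial F :=
  ∑ i ∈ range (k + 1), C (b i) * X ^ (k - i)

/-- `p_i = ρ^(i+1) - a_0 ρ^i - a_1 ρ^(i-1) - ⋯ - a_i`. -/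
def coefp {F : Type*} [Field F] (a : ℕ → F) (ρ : F) (i : ℕ) : F :=
  ρ ^ (i + 1) - ∑ m ∈ range (i + 1), a m * ρ ^ (i - m)

/-- `q_i = b_0 ρ^i + b_1 ρ^(i-1) + ⋯ + b_i`. -/
def coefq {F : Type*} [Field F] (b : ℕ → F) (ρ : F) (i : ℕ) : F :=
  ∑ m ∈ range (i + 1), b m * ρ ^ (i - m)

/-- `p′_j = γ^(j+1) + p_0 γ^j + ⋯ + p_j`. -/
noncomputable def coefp' (a : ℕ → ℂ) (ρ γ : ℂ) (j : ℕ) : ℂ :=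
  γ ^ (j + 1) + ∑ m ∈ range (j + 1), coefp a ρ m * γ ^ (j - m)

/-- `q′_j = q_0 γ^j + q_1 γ^(j-1) + ⋯ + q_j`. -/
noncomputable def coefq' (b : ℕ → ℂ) (ρ γ : ℂ) (j : ℕ) : ℂ :=
  ∑ m ∈ range (j + 1), coefq b ρ m * γ ^ (j - m)

/-- `ρ = μ (cos θ + i sin θ)`. -/
noncomputable def rho (μ θ : ℝ) : ℂ :=
  (μ : ℂ) * ((Real.cos θ : ℂ) + (Real.sin θ : ℂ) * Complex.I)

/-- The real formula
`p′_j = μ^(j+1) sin((j+2)θ)/sin θ - (1/sin θ) ∑_{m=0}^{j} a_m μ^(j-m) sin((j-m+1)θ)`. -/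
noncomputable def realP' (a : ℕ → ℝ) (μ θ : ℝ) (j : ℕ) : ℝ :=
  μ ^ (j + 1) * Real.sin (((j + 2 : ℕ) : ℝ) * θ) / Real.sin θ -
    (1 / Real.sin θ) *
      ∑ m ∈ range (j + 1), a m * μ ^ (j - m) * Real.sin (((j - m + 1 : ℕ) : ℝ) * θ)

/-- The real formula `q′_j = (1/sin θ) ∑_{m=0}^{j} b_m μ^(j-m) sin((j-m+1)θ)`. -/
noncomputable def realQ' (b : ℕ → ℝ) (μ θ : ℝ) (j : ℕ) : ℝ :=
  (1 / Real.sin θ) *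
    ∑ m ∈ range (j + 1), b m * μ ^ (j - m) * Real.sin (((j - m + 1 : ℕ) : ℝ) * θ)

/-- A real sequence `x : ℤ → ℝ` is a solution of equation (★) with real data. -/
def IsSolutionStarR (k : ℕ) (a b : ℕ → ℝ) (g : ℤ → ℝ → ℝ) (x : ℤ → ℝ) : Prop :=
  ∀ n : ℤ, 0 ≤ n →
    x (n + 1) = (∑ i ∈ range (k + 1), a i * x (n - i)) +
      g n (∑ i ∈ range (k + 1), b i * x (n - i))

/-- A real sequence `r : ℤ → ℝ` is a solution of the real second factor equation (FE1):
`r_{n+1} = -∑_{j=0}^{k-2} p′_j r_{n-j} + g_n (∑_{j=0}^{k-2} q′_j r_{n-j})` for `n ≥ 0`,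
with the real coefficients `p′_j = realP' a μ θ j` and `q′_j = realQ' b μ θ j`. -/
def IsSolutionFE1R (k : ℕ) (a b : ℕ → ℝ) (g : ℤ → ℝ → ℝ) (μ θ : ℝ) (r : ℤ → ℝ) : Prop :=
  ∀ n : ℤ, 0 ≤ n →
    r (n + 1) = -(∑ j ∈ range (k - 1), realP' a μ θ j * r (n - j)) +
      g n (∑ j ∈ range (k - 1), realQ' b μ θ j * r (n - j))

-- shift exponent inside sums
lemma sum_pow_shift (c : ℕ → ℂ) (z : ℂ) (L : ℕ) :
    z * ∑ m ∈ range (L + 1), c m * z ^ (L - m) =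
      ∑ m ∈ range (L + 1), c m * z ^ (L + 1 - m) := by
  rw [Finset.mul_sum]
  refine Finset.sum_congr rfl fun m hm => ?_
  have h : m ≤ L := Nat.lt_succ_iff.mp (Finset.mem_range.mp hm)
  have : L + 1 - m = (L - m) + 1 := by omega
  rw [this, pow_succ]; ring

-- non-monic telescoping
lemma tel₁ (z : ℂ) (c : ℕ → ℂ) (y : ℤ → ℂ) : ∀ (L : ℕ) (n : ℤ),
    ∑ i ∈ range (L + 1), c i * y (n - i) =
      (∑ j ∈ range L, (∑ m ∈ range (j + 1), c m * z ^ (j - m)) * (y (n - j) - z * y (n - j - 1)))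
       + (∑ m ∈ range (L + 1), c m * z ^ (L - m)) * y (n - L) := by
  intro L
  induction L with
  | zero => intro n; simp
  | succ L ih =>
      intro n
      rw [Finset.sum_range_succ (fun i => c i * y (n - i)), ih n,
        Finset.sum_range_succ (fun j => (∑ m ∈ range (j + 1), c m * z ^ (j - m)) * (y (n - j) - z * y (n - j - 1)))]
      have hd : (∑ m ∈ range (L + 1 + 1), c m * z ^ (L + 1 - m)) =
          c (L + 1) + z * ∑ m ∈ range (L + 1), c m * z ^ (L - m) := by
        rw [Finset.sum_range_succ, sum_pow_shift]; simp [add_comm]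
      rw [hd]
      have h1 : (n : ℤ) - (L + 1 : ℕ) = n - L - 1 := by push_cast; ring
      rw [h1]; ring

/-- coefficients of the quotient in the monic case -/
noncomputable def eco (c : ℕ → ℂ) (z : ℂ) (j : ℕ) : ℂ :=
  z ^ j + ∑ m ∈ range j, c m * z ^ (j - 1 - m)

lemma eco_succ (c : ℕ → ℂ) (z : ℂ) (j : ℕ) :
    eco c z (j + 1) = z * eco c z j + c j := by
  unfold eco
  rw [Finset.sum_range_succ]
  have h : (∑ m ∈ range j, c m * z ^ (j + 1 - 1 - m)) =
      z * ∑ m ∈ range j, c m * z ^ (j - 1 - m) := by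
    rw [Finset.mul_sum]
    refine Finset.sum_congr rfl fun m hm => ?_
    have h : m < j := Finset.mem_range.mp hm
    have : j + 1 - 1 - m = (j - 1 - m) + 1 := by omega
    rw [this, pow_succ]; ring
  rw [h]
  simp [pow_succ]; ring

-- monic telescoping
lemma tel₂ (z : ℂ) (c : ℕ → ℂ) (y : ℤ → ℂ) : ∀ (L : ℕ) (n : ℤ),
    y (n + 1) + ∑ i ∈ range L, c i * y (n - i) =
      (∑ j ∈ range L, eco c z j * (y (n + 1 - j) - z * y (n - j)))
       + eco c z L * y (n + 1 - L) := by
  intro L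
  induction L with
  | zero => intro n; simp [eco]
  | succ L ih =>
      intro n
      rw [Finset.sum_range_succ (fun i => c i * y (n - i)),
        Finset.sum_range_succ (fun j => eco c z j * (y (n + 1 - j) - z * y (n - j))),
        eco_succ, ← add_assoc, ih n]
      have h1 : (n : ℤ) + 1 - (L + 1 : ℕ) = n - L := by push_cast; ring
      rw [h1]; ring

lemma eco_coefp (a : ℕ → ℂ) (ρ : ℂ) (j : ℕ) :
    eco (fun i => -(a i)) ρ (j + 1) = coefp a ρ j := by
  unfold eco coefp
  rw [sub_eq_add_neg, ← Finset.sum_neg_distrib]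
  congr 1
  refine Finset.sum_congr rfl fun m hm => ?_
  have : j + 1 - 1 - m = j - m := by omega
  rw [this]; ring

lemma eco_coefp' (a : ℕ → ℂ) (ρ γ : ℂ) (j : ℕ) :
    eco (coefp a ρ) γ (j + 1) = coefp' a ρ γ j := by
  unfold eco coefp'
  congr 1

lemma coefq_succ (b : ℕ → ℂ) (ρ : ℂ) (j : ℕ) :
    coefq b ρ (j + 1) = ρ * coefq b ρ j + b (j + 1) := by
  unfold coefq
  rw [Finset.sum_range_succ, sum_pow_shift]
  simp

lemma coefp_succ (a : ℕ → ℂ) (ρ : ℂ) (j : ℕ) :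
    coefp a ρ (j + 1) = ρ * coefp a ρ j - a (j + 1) := by
  unfold coefp
  rw [Finset.sum_range_succ, mul_sub, sum_pow_shift, pow_succ]
  simp; ring

lemma coefp'_succ (a : ℕ → ℂ) (ρ γ : ℂ) (j : ℕ) :
    coefp' a ρ γ (j + 1) = γ * coefp' a ρ γ j + coefp a ρ (j + 1) := by
  unfold coefp'
  rw [Finset.sum_range_succ, mul_add, sum_pow_shift, pow_succ]
  simp; ring

lemma coefq'_succ (b : ℕ → ℂ) (ρ γ : ℂ) (j : ℕ) :
    coefq' b ρ γ (j + 1) = γ * coefq' b ρ γ j + coefq b ρ (j + 1) := by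
  unfold coefq'
  rw [Finset.sum_range_succ, sum_pow_shift]
  simp

lemma dd_p (a : ℕ → ℂ) (ρ γ : ℂ) : ∀ j : ℕ,
    (ρ - γ) * coefp' a ρ γ j = ρ * coefp a ρ j - γ * coefp a γ j := by
  intro j
  induction j with
  | zero => simp [coefp', coefp]; ring
  | succ j ih =>
      rw [coefp'_succ, coefp_succ a ρ, coefp_succ a γ]
      linear_combination γ * ih

lemma dd_q (b : ℕ → ℂ) (ρ γ : ℂ) : ∀ j : ℕ,
    (ρ - γ) * coefq' b ρ γ j = ρ * coefq b ρ j - γ * coefq b γ j := by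
  intro j
  induction j with
  | zero => simp [coefq', coefq]; ring
  | succ j ih =>
      rw [coefq'_succ, coefq_succ b ρ, coefq_succ b γ]
      linear_combination γ * ih


lemma rho_eq_exp (μ θ : ℝ) : rho μ θ = (μ : ℂ) * Complex.exp (θ * Complex.I) := by
  rw [rho, Complex.exp_mul_I, ← Complex.ofReal_cos, ← Complex.ofReal_sin]

lemma rho_pow (μ θ : ℝ) (N : ℕ) :
    (rho μ θ) ^ N = ((μ ^ N : ℝ) : ℂ) *
      ((Real.cos (N * θ) : ℂ) + (Real.sin (N * θ) : ℂ) * Complex.I) := by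
  rw [rho_eq_exp, mul_pow, ← Complex.exp_nat_mul]
  have h : ((N : ℂ)) * ((θ : ℂ) * Complex.I) = ((N * θ : ℝ) : ℂ) * Complex.I := by
    push_cast; ring
  rw [h, Complex.exp_mul_I, ← Complex.ofReal_cos, ← Complex.ofReal_sin]
  push_cast; ring

lemma rho_pow_sub (μ θ : ℝ) (N : ℕ) :
    (rho μ θ) ^ N - (rho μ (-θ)) ^ N =
      2 * ((μ ^ N : ℝ) : ℂ) * ((Real.sin (N * θ) : ℝ) : ℂ) * Complex.I := by
  rw [rho_pow, rho_pow]
  have h1 : Real.cos (N * -θ) = Real.cos (N * θ) := by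
    rw [mul_neg, Real.cos_neg]
  have h2 : Real.sin (N * -θ) = -Real.sin (N * θ) := by
    rw [mul_neg, Real.sin_neg]
  rw [h1, h2]; push_cast; ring

lemma conj_rho (μ θ : ℝ) : (starRingEnd ℂ) (rho μ θ) = rho μ (-θ) := by
  simp only [rho, map_mul, map_add, Complex.conj_ofReal, Complex.conj_I, Real.cos_neg,
    Real.sin_neg, Complex.ofReal_neg]
  ring

lemma rho_sub (μ θ : ℝ) : rho μ θ - rho μ (-θ) =
    2 * (μ : ℂ) * ((Real.sin θ : ℝ) : ℂ) * Complex.I := by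
  simp only [rho, Real.cos_neg, Real.sin_neg, Complex.ofReal_neg]; ring

lemma rho_ne (μ θ : ℝ) (hμ : 0 < μ) (hθ : Real.sin θ ≠ 0) : rho μ θ ≠ rho μ (-θ) := by
  intro h
  have h2 : rho μ θ - rho μ (-θ) = 0 := sub_eq_zero.mpr h
  rw [rho_sub] at h2
  have : (2 : ℂ) * (μ : ℂ) * ((Real.sin θ : ℝ) : ℂ) * Complex.I ≠ 0 := by
    apply mul_ne_zero
    apply mul_ne_zero
    apply mul_ne_zero
    · norm_num
    · exact_mod_cast Complex.ofReal_ne_zero.mpr hμ.ne'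
    · exact Complex.ofReal_ne_zero.mpr hθ
    · exact Complex.I_ne_zero
  exact this h2

lemma rho_add_conj (μ θ : ℝ) : rho μ θ + rho μ (-θ) = ((2 * μ * Real.cos θ : ℝ) : ℂ) := by
  simp only [rho, Real.cos_neg, Real.sin_neg, Complex.ofReal_neg]; push_cast; ring

lemma rho_mul_conj (μ θ : ℝ) : rho μ θ * rho μ (-θ) = ((μ ^ 2 : ℝ) : ℂ) := by
  simp only [rho, Real.cos_neg, Real.sin_neg, Complex.ofReal_neg]
  have h : ((Real.sin θ : ℂ)) ^ 2 + ((Real.cos θ : ℂ)) ^ 2 = 1 := by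
    norm_cast
    exact Real.sin_sq_add_cos_sq θ
  rw [Complex.ofReal_pow]
  linear_combination ((μ:ℂ))^2 * h + (-((μ:ℂ))^2 * ((Real.sin θ : ℂ))^2) * Complex.I_sq


lemma evalP (k : ℕ) (a : ℕ → ℂ) (z : ℂ) :
    (polyP k a).eval z = z ^ (k + 1) - ∑ i ∈ range (k + 1), a i * z ^ (k - i) := by
  simp [polyP, eval_finset_sum]

lemma evalQ (k : ℕ) (b : ℕ → ℂ) (z : ℂ) :
    (polyQ k b).eval z = ∑ i ∈ range (k + 1), b i * z ^ (k - i) := by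
  simp [polyQ, eval_finset_sum]

lemma conj_root_P (k : ℕ) (a : ℕ → ℝ) (μ θ : ℝ)
    (hP : (polyP k (fun i => (a i : ℂ))).eval (rho μ θ) = 0) :
    (rho μ (-θ)) ^ (k + 1) - ∑ i ∈ range (k + 1), (a i : ℂ) * (rho μ (-θ)) ^ (k - i) = 0 := by
  rw [evalP] at hP
  have := congrArg (starRingEnd ℂ) hP
  simpa [map_sub, map_pow, map_sum, map_mul, Complex.conj_ofReal, conj_rho] using this

lemma conj_root_Q (k : ℕ) (b : ℕ → ℝ) (μ θ : ℝ)
    (hQ : (polyQ k (fun i => (b i : ℂ))).eval (rho μ θ) = 0) :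
    ∑ i ∈ range (k + 1), (b i : ℂ) * (rho μ (-θ)) ^ (k - i) = 0 := by
  rw [evalQ] at hQ
  have := congrArg (starRingEnd ℂ) hQ
  simpa [map_sum, map_mul, map_pow, Complex.conj_ofReal, conj_rho] using this

lemma mul_coefp_top (a : ℕ → ℂ) (z : ℂ) (K : ℕ) :
    z * coefp a z K = z ^ (K + 2) - ∑ m ∈ range (K + 2), a m * z ^ (K + 1 - m) + a (K + 1) := by
  unfold coefp
  rw [Finset.sum_range_succ (fun m => a m * z ^ (K + 1 - m)) (K + 1), mul_sub, sum_pow_shift]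
  simp [pow_succ]; ring

lemma mul_coefq_top (b : ℕ → ℂ) (z : ℂ) (K : ℕ) :
    z * coefq b z K = (∑ m ∈ range (K + 2), b m * z ^ (K + 1 - m)) - b (K + 1) := by
  unfold coefq
  rw [Finset.sum_range_succ (fun m => b m * z ^ (K + 1 - m)) (K + 1), sum_pow_shift]
  simp

lemma vanish_p (a : ℕ → ℂ) (ρ γ : ℂ) (hne : ρ ≠ γ) (K : ℕ)
    (hρ : ρ ^ (K + 2) - ∑ m ∈ range (K + 2), a m * ρ ^ (K + 1 - m) = 0)
    (hγ : γ ^ (K + 2) - ∑ m ∈ range (K + 2), a m * γ ^ (K + 1 - m) = 0) :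
    coefp' a ρ γ K = 0 := by
  have h := dd_p a ρ γ K
  rw [mul_coefp_top, mul_coefp_top] at h
  have h2 : (ρ - γ) * coefp' a ρ γ K = 0 := by rw [h]; linear_combination hρ - hγ
  rcases mul_eq_zero.mp h2 with h3 | h3
  · exact absurd (sub_eq_zero.mp h3) hne
  · exact h3

lemma vanish_q (b : ℕ → ℂ) (ρ γ : ℂ) (hne : ρ ≠ γ) (K : ℕ)
    (hρ : ∑ m ∈ range (K + 2), b m * ρ ^ (K + 1 - m) = 0)
    (hγ : ∑ m ∈ range (K + 2), b m * γ ^ (K + 1 - m) = 0) :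
    coefq' b ρ γ K = 0 := by
  have h := dd_q b ρ γ K
  rw [mul_coefq_top, mul_coefq_top] at h
  have h2 : (ρ - γ) * coefq' b ρ γ K = 0 := by rw [h]; linear_combination hρ - hγ
  rcases mul_eq_zero.mp h2 with h3 | h3
  · exact absurd (sub_eq_zero.mp h3) hne
  · exact h3

lemma term_eq (μ θ : ℝ) (hθ : Real.sin θ ≠ 0) (c : ℝ) (N : ℕ) (hN : 1 ≤ N) :
    (c : ℂ) * (rho μ θ) ^ N - (c : ℂ) * (rho μ (-θ)) ^ N =
      (rho μ θ - rho μ (-θ)) *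
        ((1 / Real.sin θ * (c * μ ^ (N - 1) * Real.sin ((N : ℝ) * θ)) : ℝ) : ℂ) := by
  rw [← mul_sub, rho_pow_sub, rho_sub]
  have h : μ ^ N = μ * μ ^ (N - 1) := by
    conv_lhs => rw [show N = (N - 1) + 1 by omega]
    rw [pow_succ]; ring
  rw [h]
  have hs : Complex.sin θ ≠ 0 := by
    rw [← Complex.ofReal_sin]; exact Complex.ofReal_ne_zero.mpr hθ
  push_cast
  field_simp


lemma sum_term_eq (w : ℕ → ℝ) (μ θ : ℝ) (hθ : Real.sin θ ≠ 0) (j : ℕ) :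
    (∑ m ∈ range (j + 1), (w m : ℂ) * (rho μ θ) ^ (j + 1 - m)) -
      (∑ m ∈ range (j + 1), (w m : ℂ) * (rho μ (-θ)) ^ (j + 1 - m)) =
    (rho μ θ - rho μ (-θ)) *
      ((1 / Real.sin θ *
        ∑ m ∈ range (j + 1), w m * μ ^ (j - m) * Real.sin (((j - m + 1 : ℕ) : ℝ) * θ) : ℝ) : ℂ) := by
  rw [← Finset.sum_sub_distrib]
  push_cast [Complex.ofReal_sum, Finset.mul_sum]
  refine Finset.sum_congr rfl fun m hm => ?_
  have hmj : m ≤ j := Nat.lt_succ_iff.mp (Finset.mem_range.mp hm)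
  have h := term_eq μ θ hθ (w m) (j + 1 - m) (by omega)
  have e1 : j + 1 - m - 1 = j - m := by omega
  have e2 : ((j + 1 - m : ℕ) : ℝ) = ((j - m + 1 : ℕ) : ℝ) := by congr 1; omega
  rw [e1, e2] at h
  rw [h]
  push_cast
  ring

lemma realQ'_eq (b : ℕ → ℝ) (μ θ : ℝ) (hμ : 0 < μ) (hθ : Real.sin θ ≠ 0) (j : ℕ) :
    coefq' (fun i => (b i : ℂ)) (rho μ θ) (rho μ (-θ)) j = ((realQ' b μ θ j : ℝ) : ℂ) := by
  have hne := rho_ne μ θ hμ hθ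
  apply mul_left_cancel₀ (sub_ne_zero.mpr hne)
  rw [dd_q]
  have h1 : rho μ θ * coefq (fun i => (b i : ℂ)) (rho μ θ) j =
      ∑ m ∈ range (j + 1), (b m : ℂ) * (rho μ θ) ^ (j + 1 - m) := by
    unfold coefq; rw [sum_pow_shift]
  have h2 : rho μ (-θ) * coefq (fun i => (b i : ℂ)) (rho μ (-θ)) j =
      ∑ m ∈ range (j + 1), (b m : ℂ) * (rho μ (-θ)) ^ (j + 1 - m) := by
    unfold coefq; rw [sum_pow_shift]
  rw [h1, h2, sum_term_eq b μ θ hθ j, realQ']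

lemma realP'_eq (a : ℕ → ℝ) (μ θ : ℝ) (hμ : 0 < μ) (hθ : Real.sin θ ≠ 0) (j : ℕ) :
    coefp' (fun i => (a i : ℂ)) (rho μ θ) (rho μ (-θ)) j = ((realP' a μ θ j : ℝ) : ℂ) := by
  have hne := rho_ne μ θ hμ hθ
  apply mul_left_cancel₀ (sub_ne_zero.mpr hne)
  rw [dd_p]
  have h1 : ∀ θ' : ℝ, rho μ θ' * coefp (fun i => (a i : ℂ)) (rho μ θ') j =
      (rho μ θ') ^ (j + 2) -
        ∑ m ∈ range (j + 1), (a m : ℂ) * (rho μ θ') ^ (j + 1 - m) := by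
    intro θ'
    unfold coefp
    rw [mul_sub, sum_pow_shift, ← pow_succ']
  rw [h1 θ, h1 (-θ)]
  have hlead := term_eq μ θ hθ 1 (j + 2) (by omega)
  simp only [Complex.ofReal_one, one_mul] at hlead
  have hsum := sum_term_eq a μ θ hθ j
  have e1 : j + 2 - 1 = j + 1 := by omega
  rw [e1] at hlead
  have goal : ((rho μ θ) ^ (j + 2) - (rho μ (-θ)) ^ (j + 2)) -
      ((∑ m ∈ range (j + 1), (a m : ℂ) * (rho μ θ) ^ (j + 1 - m)) -
       (∑ m ∈ range (j + 1), (a m : ℂ) * (rho μ (-θ)) ^ (j + 1 - m))) =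
      (rho μ θ - rho μ (-θ)) * ((realP' a μ θ j : ℝ) : ℂ) := by
    rw [hlead, hsum, realP']
    push_cast
    ring
  linear_combination goal

noncomputable def Sop (z : ℂ) (y : ℤ → ℂ) : ℤ → ℂ := fun m => y m - z * y (m - 1)

lemma Sop_succ (z : ℂ) (y : ℤ → ℂ) (n : ℤ) : Sop z y (n + 1) = y (n + 1) - z * y n := by
  simp [Sop]

lemma step_monic (z : ℂ) (c : ℕ → ℂ) (y : ℤ → ℂ) (L : ℕ)
    (hvan : eco c z (L + 1) = 0) (n : ℤ) :
    y (n + 1) + ∑ i ∈ range (L + 1), c i * y (n - i) =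
      Sop z y (n + 1) + ∑ j ∈ range L, eco c z (j + 1) * Sop z y (n - j) := by
  have h := tel₂ z c y (L + 1) n
  rw [hvan, zero_mul, add_zero] at h
  rw [h, Finset.sum_range_succ', add_comm]
  congr 1
  · rw [Sop_succ]
    simp [eco]
  · refine Finset.sum_congr rfl fun j hj => ?_
    have e1 : (n : ℤ) + 1 - ((j : ℤ) + 1) = n - j := by ring
    have e2 : (n : ℤ) - ((j : ℤ) + 1) = n - j - 1 := by ring
    push_cast
    rw [e1, e2]
    rfl

lemma step_plain (z : ℂ) (c : ℕ → ℂ) (y : ℤ → ℂ) (L : ℕ)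
    (hvan : (∑ m ∈ range (L + 1), c m * z ^ (L - m)) = 0) (n : ℤ) :
    ∑ i ∈ range (L + 1), c i * y (n - i) =
      ∑ j ∈ range L, (∑ m ∈ range (j + 1), c m * z ^ (j - m)) * Sop z y (n - j) := by
  rw [tel₁ z c y L n, hvan, zero_mul, add_zero]
  simp only [Sop]

lemma chainP (a : ℕ → ℝ) (μ θ : ℝ) (K : ℕ) (x : ℤ → ℝ)
    (hP : (polyP (K + 2) (fun i => (a i : ℂ))).eval (rho μ θ) = 0)
    (hPγ : (rho μ (-θ)) ^ (K + 2 + 1) -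
      ∑ i ∈ range (K + 2 + 1), (a i : ℂ) * (rho μ (-θ)) ^ (K + 2 - i) = 0)
    (hne : rho μ θ ≠ rho μ (-θ)) (n : ℤ) :
    ((x (n + 1) : ℂ)) - ∑ i ∈ range (K + 2 + 1), (a i : ℂ) * (x (n - i) : ℂ) =
      Sop (rho μ (-θ)) (Sop (rho μ θ) (fun m => (x m : ℂ))) (n + 1)
        + ∑ j ∈ range (K + 1), coefp' (fun i => (a i : ℂ)) (rho μ θ) (rho μ (-θ)) j *
            Sop (rho μ (-θ)) (Sop (rho μ θ) (fun m => (x m : ℂ))) (n - j) := by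
  set ρ := rho μ θ with hρdef
  set γ := rho μ (-θ) with hγdef
  set xc : ℤ → ℂ := fun m => (x m : ℂ) with hxc
  set aC : ℕ → ℂ := fun i => (a i : ℂ) with haC
  rw [evalP] at hP
  have hvan1 : eco (fun i => -(aC i)) ρ (K + 2 + 1) = 0 := by
    rw [eco_coefp]
    unfold coefp
    exact hP
  have step1 := step_monic ρ (fun i => -(aC i)) xc (K + 2) hvan1 n
  simp only [eco_coefp, neg_mul, Finset.sum_neg_distrib, ← sub_eq_add_neg] at step1
  have hvan2 : eco (coefp aC ρ) γ (K + 1 + 1) = 0 := by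
    rw [eco_coefp']
    apply vanish_p aC ρ γ hne
    · exact hP
    · exact hPγ
  have step2 := step_monic γ (coefp aC ρ) (Sop ρ xc) (K + 1) hvan2 n
  simp only [eco_coefp'] at step2
  exact step1.trans step2

lemma chainQ (b : ℕ → ℝ) (μ θ : ℝ) (K : ℕ) (x : ℤ → ℝ)
    (hQ : (polyQ (K + 2) (fun i => (b i : ℂ))).eval (rho μ θ) = 0)
    (hQγ : ∑ i ∈ range (K + 2 + 1), (b i : ℂ) * (rho μ (-θ)) ^ (K + 2 - i) = 0)
    (hne : rho μ θ ≠ rho μ (-θ)) (n : ℤ) :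
    (∑ i ∈ range (K + 2 + 1), (b i : ℂ) * (x (n - i) : ℂ)) =
      ∑ j ∈ range (K + 1), coefq' (fun i => (b i : ℂ)) (rho μ θ) (rho μ (-θ)) j *
          Sop (rho μ (-θ)) (Sop (rho μ θ) (fun m => (x m : ℂ))) (n - j) := by
  set ρ := rho μ θ with hρdef
  set γ := rho μ (-θ) with hγdef
  set xc : ℤ → ℂ := fun m => (x m : ℂ) with hxc
  set bC : ℕ → ℂ := fun i => (b i : ℂ) with hbC
  rw [evalQ] at hQ
  have stepC : (∑ i ∈ range (K + 2 + 1), bC i * xc (n - i)) =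
      ∑ j ∈ range (K + 2), coefq bC ρ j * Sop ρ xc (n - j) :=
    step_plain ρ bC xc (K + 2) hQ n
  have hvan2 : coefq' bC ρ γ (K + 1) = 0 := vanish_q bC ρ γ hne (K + 1) hQ hQγ
  have stepD : (∑ i ∈ range (K + 1 + 1), coefq bC ρ i * Sop ρ xc (n - i)) =
      ∑ j ∈ range (K + 1), coefq' bC ρ γ j * Sop γ (Sop ρ xc) (n - j) :=
    step_plain γ (coefq bC ρ) (Sop ρ xc) (K + 1) hvan2 n
  exact stepC.trans stepD

lemma Sop_real (μ θ : ℝ) (x : ℤ → ℝ) (m : ℤ) :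
    Sop (rho μ (-θ)) (Sop (rho μ θ) (fun t => (x t : ℂ))) m =
      ((x m - 2 * μ * Real.cos θ * x (m - 1) + μ ^ 2 * x (m - 2) : ℝ) : ℂ) := by
  simp only [Sop]
  rw [show m - 1 - 1 = m - 2 by ring]
  have h1 := rho_add_conj μ θ
  have h2 := rho_mul_conj μ θ
  push_cast at h1 h2 ⊢
  linear_combination (-(x (m - 1) : ℂ)) * h1 + ((x (m - 2) : ℂ)) * h2

lemma E1R (a : ℕ → ℝ) (μ θ : ℝ) (hμ : 0 < μ) (hθ : Real.sin θ ≠ 0) (K : ℕ) (x : ℤ → ℝ)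
    (hP : (polyP (K + 2) (fun i => (a i : ℂ))).eval (rho μ θ) = 0) (n : ℤ) :
    x (n + 1) - ∑ i ∈ range (K + 2 + 1), a i * x (n - i) =
      (x (n + 1) - 2 * μ * Real.cos θ * x (n + 1 - 1) + μ ^ 2 * x (n + 1 - 2)) +
        ∑ j ∈ range (K + 1), realP' a μ θ j *
          (x (n - j) - 2 * μ * Real.cos θ * x (n - j - 1) + μ ^ 2 * x (n - j - 2)) := by
  have hne := rho_ne μ θ hμ hθ
  have hc := chainP a μ θ K x hP (conj_root_P (K + 2) a μ θ hP) hne n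
  simp only [Sop_real μ θ x, realP'_eq a μ θ hμ hθ] at hc
  exact_mod_cast hc

lemma E2R (b : ℕ → ℝ) (μ θ : ℝ) (hμ : 0 < μ) (hθ : Real.sin θ ≠ 0) (K : ℕ) (x : ℤ → ℝ)
    (hQ : (polyQ (K + 2) (fun i => (b i : ℂ))).eval (rho μ θ) = 0) (n : ℤ) :
    ∑ i ∈ range (K + 2 + 1), b i * x (n - i) =
      ∑ j ∈ range (K + 1), realQ' b μ θ j *
        (x (n - j) - 2 * μ * Real.cos θ * x (n - j - 1) + μ ^ 2 * x (n - j - 2)) := by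
  have hne := rho_ne μ θ hμ hθ
  have hc := chainQ b μ θ K x hQ (conj_root_Q (K + 2) b μ θ hQ) hne n
  simp only [Sop_real μ θ x, realQ'_eq b μ θ hμ hθ] at hc
  exact_mod_cast hc

/-- with `ρ = μ e^{iθ}` (`μ > 0`, `sin θ ≠ 0`) a common root of the
complexified `P` and `Q`, a real sequence `x` solves (★) if and only if
`r_n := x_n - 2μ cos θ x_{n-1} + μ² x_{n-2}` solves the real second factor
equation (FE1). -/
theorem statement12 (k : ℕ) (hk : 2 ≤ k) (a b : ℕ → ℝ) (g : ℤ → ℝ → ℝ) (μ θ : ℝ)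
    (hμ : 0 < μ) (hθ : Real.sin θ ≠ 0)
    (hP : (polyP k (fun i => (a i : ℂ))).eval (rho μ θ) = 0)
    (hQ : (polyQ k (fun i => (b i : ℂ))).eval (rho μ θ) = 0)
    (x : ℤ → ℝ) :
    IsSolutionStarR k a b g x ↔
      IsSolutionFE1R k a b g μ θ
        (fun n => x n - 2 * μ * Real.cos θ * x (n - 1) + μ ^ 2 * x (n - 2)) := by
  obtain ⟨K, rfl⟩ : ∃ K, k = K + 2 := ⟨k - 2, by omega⟩
  unfold IsSolutionStarR IsSolutionFE1R
  rw [show K + 2 - 1 = K + 1 from rfl]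
  constructor
  · intro hsol n hn
    have h1 := hsol n hn
    have e1 := E1R a μ θ hμ hθ K x hP n
    have e2 := E2R b μ θ hμ hθ K x hQ n
    simp only []
    rw [e2] at h1
    linarith [e1, h1]
  · intro hsol n hn
    have h1 := hsol n hn
    have e1 := E1R a μ θ hμ hθ K x hP n
    have e2 := E2R b μ θ hμ hθ K x hQ n
    simp only [] at h1
    rw [e2]
    linarith [e1, h1]
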